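/- arXiv:2005.11165 — 10 statements merged into one kernel-verified Lean document; each statement's English description precedes it below -/
import Mathlib

section
/- If c ∈ ℂ \ {0} with |c| ≠ 1 and f : I → E is c-uniformly recurrent, then f ≡ 0. -/
/-- A set `S ⊆ ℝ` is relatively dense in `[0,∞)`: there is `l > 0` such that
every subinterval of `[0,∞)` of length `l` meets `S`. -/
def RelativelyDense (S : Set ℝ) : Prop :=
  ∃ l > 0, ∀ a : ℝ, 0 ≤ a → ∃ τ ∈ S, a ≤ τ ∧ τ ≤ a + l

/-- `f` is `c`-almost periodic on `I`. -/
def CAlmostPeriodic {E : Type*} [NormedAddCommGroup E] [NormedSpace ℂ E]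
    (I : Set ℝ) (c : ℂ) (f : ℝ → E) : Prop :=
  ∀ ε > 0, RelativelyDense {τ : ℝ | 0 < τ ∧ ∀ t ∈ I, ‖f (t + τ) - c • f t‖ ≤ ε}

/-- `f` is `c`-uniformly recurrent on `I`. -/
def CUniformlyRecurrent {E : Type*} [NormedAddCommGroup E] [NormedSpace ℂ E]
    (I : Set ℝ) (c : ℂ) (f : ℝ → E) : Prop :=
  ∃ α : ℕ → ℝ, StrictMono α ∧ (∀ n, 0 < α n) ∧
    Filter.Tendsto α Filter.atTop Filter.atTop ∧
    ∀ ε > 0, ∃ N : ℕ, ∀ n ≥ N, ∀ t ∈ I, ‖f (t + α n) - c • f t‖ ≤ ε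

set_option maxHeartbeats 2000000 in
/-- if |c| ≠ 1, c ≠ 0, a c-uniformly recurrent function is identically zero. -/
theorem cUniformlyRecurrent_eq_zero {E : Type*} [NormedAddCommGroup E] [NormedSpace ℂ E]
    (I : Set ℝ) (hI : I = Set.univ ∨ I = Set.Ici (0 : ℝ))
    (c : ℂ) (hc0 : c ≠ 0) (hc1 : ‖c‖ ≠ 1) (f : ℝ → E) (hf : Continuous f)
    (hur : CUniformlyRecurrent I c f) :
    ∀ t ∈ I, f t = 0 := by
  obtain ⟨α, hmono, hpos, htop, happ⟩ := hur
  have hmem : ∀ s : ℝ, 0 ≤ s → s ∈ I := by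
    rcases hI with h | h <;> intro s hs <;> simp [h, hs]
  have hadd : ∀ t ∈ I, ∀ s : ℝ, 0 ≤ s → t + s ∈ I := by
    rcases hI with h | h
    · intro t _ s _; simp [h]
    · intro t ht s hs
      rw [h] at ht ⊢
      exact add_nonneg ht hs
  have hcpos : (0:ℝ) < ‖c‖ := norm_pos_iff.mpr hc0
  rcases lt_or_gt_of_ne hc1 with hlt | hgt
  · -- Case ‖c‖ < 1 : f tends to 0 at +∞
    have key : ∀ ε > (0:ℝ), ∃ T : ℝ, ∀ u : ℝ, T ≤ u → ‖f u‖ ≤ ε := by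
      intro ε hε
      have h1c : (0:ℝ) < 1 - ‖c‖ := by linarith
      set ε₁ : ℝ := ε * (1 - ‖c‖) / 2 with hε₁def
      have hε₁ : 0 < ε₁ := by positivity
      obtain ⟨N, hN⟩ := happ ε₁ hε₁
      set a : ℝ := α N with hadef
      have ha : 0 < a := hpos N
      have happN : ∀ s ∈ I, ‖f (s + a) - c • f s‖ ≤ ε₁ := fun s hs => hN N le_rfl s hs
      have iter : ∀ k : ℕ, ∀ s : ℝ, 0 ≤ s →
          ‖f (s + k * a)‖ ≤ ‖c‖ ^ k * ‖f s‖ + ε / 2 := by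
        intro k
        induction k with
        | zero => intro s _; simp; positivity
        | succ k ih =>
          intro s hs
          have hu : s + k * a ∈ I := hmem _ (by positivity)
          have h1 : ‖f (s + k * a + a) - c • f (s + k * a)‖ ≤ ε₁ := happN _ hu
          have h2 : ‖f (s + k * a + a)‖ ≤ ‖c‖ * ‖f (s + k * a)‖ + ε₁ := by
            have := norm_sub_norm_le (f (s + k * a + a)) (c • f (s + k * a))
            rw [norm_smul] at this
            linarith
          have heq : s + (k + 1 : ℕ) * a = s + k * a + a := by push_cast; ring
          rw [heq]
          have h3 := ih s hs
          have hc0' : (0:ℝ) ≤ ‖c‖ := hcpos.le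
          have h4 : ‖c‖ * ‖f (s + k * a)‖ ≤ ‖c‖ * (‖c‖ ^ k * ‖f s‖ + ε / 2) :=
            mul_le_mul_of_nonneg_left h3 hc0'
          have h5 : ‖c‖ * (ε / 2) + ε₁ ≤ ε / 2 := by
            have : ε₁ = (1 - ‖c‖) * (ε / 2) := by rw [hε₁def]; ring
            nlinarith
          calc ‖f (s + k * a + a)‖ ≤ ‖c‖ * ‖f (s + k * a)‖ + ε₁ := h2
            _ ≤ ‖c‖ * (‖c‖ ^ k * ‖f s‖ + ε / 2) + ε₁ := by linarith
            _ = ‖c‖ ^ (k + 1) * ‖f s‖ + (‖c‖ * (ε / 2) + ε₁) := by ring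
            _ ≤ ‖c‖ ^ (k + 1) * ‖f s‖ + ε / 2 := by linarith
      obtain ⟨C, hC⟩ : ∃ C, ∀ x ∈ Set.Icc (0:ℝ) a, ‖f x‖ ≤ C :=
        isCompact_Icc.exists_bound_of_continuousOn hf.continuousOn
      have hC0 : 0 ≤ C := le_trans (norm_nonneg _) (hC 0 ⟨le_rfl, ha.le⟩)
      obtain ⟨k, hk⟩ : ∃ k : ℕ, ‖c‖ ^ k < ε / 2 / (C + 1) :=
        exists_pow_lt_of_lt_one (by positivity) hlt
      refine ⟨k * a, fun u hu => ?_⟩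
      have hu0 : 0 ≤ u := le_trans (by positivity) hu
      set j : ℕ := ⌊u / a⌋₊ with hjdef
      have hdiv0 : 0 ≤ u / a := by positivity
      have hj1 : (j : ℝ) * a ≤ u := by
        have := Nat.floor_le hdiv0
        calc (j:ℝ) * a ≤ u / a * a := by nlinarith
          _ = u := by field_simp
      have hj2 : u < ((j:ℝ) + 1) * a := by
        have := Nat.lt_floor_add_one (u / a)
        calc u = u / a * a := by field_simp
          _ < ((j:ℝ) + 1) * a := by nlinarith
      have hkj : k ≤ j := by
        apply Nat.le_floor
        rw [le_div_iff₀ ha]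
        exact hu
      set s : ℝ := u - j * a with hsdef
      have hs0 : 0 ≤ s := by simp [hsdef]; linarith
      have hsa : s ≤ a := by simp [hsdef]; nlinarith
      have husj : u = s + j * a := by rw [hsdef]; ring
      have h6 := iter j s hs0
      rw [← husj] at h6
      have h7 : ‖f s‖ ≤ C := hC s ⟨hs0, hsa⟩
      have h8 : ‖c‖ ^ j ≤ ‖c‖ ^ k := pow_le_pow_of_le_one hcpos.le hlt.le hkj
      have h9 : ‖c‖ ^ j * ‖f s‖ ≤ ‖c‖ ^ k * (C + 1) := by
        have hp : (0:ℝ) ≤ ‖c‖ ^ j := by positivity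
        have hp' : (0:ℝ) ≤ ‖c‖ ^ k := by positivity
        calc ‖c‖ ^ j * ‖f s‖ ≤ ‖c‖ ^ j * (C + 1) := by nlinarith
          _ ≤ ‖c‖ ^ k * (C + 1) := by nlinarith
      have h10 : ‖c‖ ^ k * (C + 1) ≤ ε / 2 :=
        ((lt_div_iff₀ (show (0:ℝ) < C + 1 by positivity)).mp hk).le
      linarith
    intro t ht
    have hlim1 : Filter.Tendsto (fun n => f (t + α n)) Filter.atTop (nhds (c • f t)) := by
      rw [Metric.tendsto_atTop]
      intro ε hε
      obtain ⟨N, hN⟩ := happ (ε / 2) (by positivity)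
      exact ⟨N, fun n hn => by
        have := hN n hn t ht
        rw [dist_eq_norm]
        linarith⟩
    have hlim2 : Filter.Tendsto (fun n => f (t + α n)) Filter.atTop (nhds 0) := by
      rw [Metric.tendsto_atTop]
      intro ε hε
      obtain ⟨T, hT⟩ := key (ε / 2) (by positivity)
      obtain ⟨N, hN⟩ := (htop.eventually_ge_atTop (T - t)).exists_forall_of_atTop
      refine ⟨N, fun n hn => ?_⟩
      rw [dist_eq_norm, sub_zero]
      have := hT (t + α n) (by have := hN n hn; linarith)
      linarith
    have : c • f t = 0 := tendsto_nhds_unique hlim1 hlim2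
    exact (smul_eq_zero.mp this).resolve_left hc0
  · -- Case ‖c‖ > 1
    intro t ht
    by_contra hft
    have hd : 0 < ‖f t‖ := norm_pos_iff.mpr hft
    set d : ℝ := ‖f t‖ with hddef
    -- quasi-period γ with defect ≤ 1
    obtain ⟨N₁, hN₁⟩ := happ (‖c‖ / 2) (by positivity)
    set γ : ℝ := α (N₁ + 1) - α N₁ with hγdef
    have hγ : 0 < γ := sub_pos.mpr (hmono (Nat.lt_succ_self N₁))
    have hper : ∀ s ∈ I, ‖f (s + γ) - f s‖ ≤ 1 := by
      intro s hs
      have hsγ : s + γ ∈ I := hadd s hs γ hγ.le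
      have h1 : ‖f (s + γ + α N₁) - c • f (s + γ)‖ ≤ ‖c‖ / 2 := hN₁ N₁ le_rfl _ hsγ
      have h2 : ‖f (s + α (N₁ + 1)) - c • f s‖ ≤ ‖c‖ / 2 := hN₁ (N₁+1) (Nat.le_succ _) s hs
      have heq : s + γ + α N₁ = s + α (N₁ + 1) := by rw [hγdef]; ring
      rw [heq] at h1
      have h3 : ‖c • f (s + γ) - c • f s‖ ≤ ‖c‖ := by
        calc ‖c • f (s + γ) - c • f s‖
            = ‖(f (s + α (N₁+1)) - c • f s) - (f (s + α (N₁+1)) - c • f (s + γ))‖ := by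
              congr 1; abel
          _ ≤ ‖f (s + α (N₁+1)) - c • f s‖ + ‖f (s + α (N₁+1)) - c • f (s + γ)‖ :=
              norm_sub_le _ _
          _ ≤ ‖c‖ / 2 + ‖c‖ / 2 := add_le_add h2 h1
          _ = ‖c‖ := by ring
      rw [← smul_sub, norm_smul] at h3
      exact le_of_mul_le_mul_left (h3.trans_eq (mul_one ‖c‖).symm) hcpos
    have hperit : ∀ j : ℕ, ∀ s ∈ I, ‖f (s + j * γ) - f s‖ ≤ j := by
      intro j
      induction j with
      | zero => intro s _; simp
      | succ j ih =>
        intro s hs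
        have hsj : s + j * γ ∈ I := hadd s hs _ (by positivity)
        have h1 := hper _ hsj
        have h2 := ih s hs
        have heq : s + (j + 1 : ℕ) * γ = s + j * γ + γ := by push_cast; ring
        rw [heq]
        calc ‖f (s + j * γ + γ) - f s‖
            ≤ ‖f (s + j * γ + γ) - f (s + j * γ)‖ + ‖f (s + j * γ) - f s‖ :=
              norm_sub_le_norm_sub_add_norm_sub _ _ _
          _ ≤ 1 + j := add_le_add h1 h2
          _ = ((j + 1 : ℕ) : ℝ) := by push_cast; ring
    -- exponential lower bound along t + k β
    have hε₂ : 0 < d * (‖c‖ - 1) / 2 := by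
      have : 0 < ‖c‖ - 1 := by linarith
      positivity
    set ε₂ : ℝ := d * (‖c‖ - 1) / 2 with hε₂def
    obtain ⟨N₂, hN₂⟩ := happ ε₂ hε₂
    set β : ℝ := α N₂ with hβdef
    have hβ : 0 < β := hpos N₂
    have hlow : ∀ k : ℕ, ‖c‖ ^ k * (d / 2) ≤ ‖f (t + k * β)‖ := by
      have main : ∀ k : ℕ,
          ‖c‖ ^ k * d - ε₂ * ((‖c‖ ^ k - 1) / (‖c‖ - 1)) ≤ ‖f (t + k * β)‖ := by
        intro k
        induction k with
        | zero => simp [hddef]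
        | succ k ih =>
          have hu : t + k * β ∈ I := hadd t ht _ (by positivity)
          have h1 : ‖f (t + k * β + β) - c • f (t + k * β)‖ ≤ ε₂ := hN₂ N₂ le_rfl _ hu
          have h2 : ‖c‖ * ‖f (t + k * β)‖ - ε₂ ≤ ‖f (t + k * β + β)‖ := by
            have := norm_sub_norm_le (c • f (t + k * β)) (f (t + k * β + β))
            rw [norm_smul, norm_sub_rev] at this
            linarith
          have heq : t + (k + 1 : ℕ) * β = t + k * β + β := by push_cast; ring
          rw [heq]
          have hgen : ∀ x : ℝ, x - 1 ≠ 0 → x * (x ^ k * d - ε₂ * ((x ^ k - 1) / (x - 1))) - ε₂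
              = x ^ (k+1) * d - ε₂ * ((x ^ (k+1) - 1) / (x - 1)) := by
            intro x hx
            field_simp
            ring
          have h3 := hgen ‖c‖ (by linarith)
          have h4 : ‖c‖ * (‖c‖ ^ k * d - ε₂ * ((‖c‖ ^ k - 1) / (‖c‖ - 1)))
              ≤ ‖c‖ * ‖f (t + k * β)‖ := mul_le_mul_of_nonneg_left ih hcpos.le
          linarith
      intro k
      have h5 := main k
      have hne : (0:ℝ) < ‖c‖ - 1 := by linarith
      have hgen2 : ∀ x : ℝ, x - 1 ≠ 0 →
          d * (x - 1) / 2 * ((x ^ k - 1) / (x - 1)) = d / 2 * x ^ k - d / 2 := by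
        intro x hx
        field_simp
      have h6 : ε₂ * ((‖c‖ ^ k - 1) / (‖c‖ - 1)) ≤ ‖c‖ ^ k * (d / 2) := by
        rw [hε₂def, hgen2 ‖c‖ (by linarith)]
        nlinarith [hd]
      nlinarith
    -- linear upper bound
    obtain ⟨M, hM⟩ : ∃ M, ∀ x ∈ Set.Icc t (t + γ), ‖f x‖ ≤ M :=
      isCompact_Icc.exists_bound_of_continuousOn hf.continuousOn
    have hMd : d ≤ M := hM t ⟨le_rfl, by linarith⟩
    have hup : ∀ k : ℕ, ‖f (t + k * β)‖ ≤ M + k * (β / γ) := by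
      intro k
      set j : ℕ := ⌊(k * β) / γ⌋₊ with hjdef
      have hdiv0 : 0 ≤ (k : ℝ) * β / γ := by positivity
      have hj1 : (j : ℝ) * γ ≤ k * β := by
        have := Nat.floor_le hdiv0
        calc (j:ℝ) * γ ≤ (k * β) / γ * γ := by nlinarith
          _ = k * β := by field_simp
      have hj2 : (k:ℝ) * β < ((j:ℝ) + 1) * γ := by
        have := Nat.lt_floor_add_one ((k:ℝ) * β / γ)
        calc (k:ℝ) * β = (k * β) / γ * γ := by field_simp
          _ < ((j:ℝ) + 1) * γ := by nlinarith
      set r : ℝ := k * β - j * γ with hrdef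
      have hr0 : 0 ≤ r := by simp [hrdef]; linarith
      have hrγ : r ≤ γ := by simp [hrdef]; nlinarith
      have htr : t + r ∈ I := hadd t ht r hr0
      have heq : t + k * β = (t + r) + j * γ := by rw [hrdef]; ring
      have h1 := hperit j (t + r) htr
      have h2 : ‖f (t + r)‖ ≤ M := hM _ ⟨by linarith, by linarith⟩
      have h3 : ‖f ((t + r) + j * γ)‖ ≤ ‖f (t + r)‖ + j := by
        have := norm_sub_norm_le (f ((t + r) + j * γ)) (f (t + r))
        linarith
      have h4 : (j : ℝ) ≤ k * β / γ := Nat.floor_le hdiv0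
      have h5 : (k:ℝ) * β / γ = k * (β / γ) := by ring
      rw [heq]
      calc ‖f ((t + r) + j * γ)‖ ≤ ‖f (t + r)‖ + j := h3
        _ ≤ M + k * (β / γ) := by rw [← h5]; linarith
    -- contradiction: exponential beats linear
    have hcontr : ∃ k : ℕ, M + k * (β / γ) < ‖c‖ ^ k * (d / 2) := by
      set e : ℝ := ‖c‖ - 1 with hedef
      have he : 0 < e := by rw [hedef]; linarith
      set A : ℝ := d / 2 with hAdef
      have hA : 0 < A := by positivity
      set B : ℝ := β / γ with hBdef
      have hB : 0 < B := by positivity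
      obtain ⟨m₀, hm₀⟩ := exists_nat_ge ((M + 2 * B + 1) / (A * e ^ 2))
      set m : ℕ := max m₀ 1 with hmdef
      have hm1 : 1 ≤ m := le_max_right _ _
      have hm1' : (1:ℝ) ≤ m := by exact_mod_cast hm1
      have hmm : (M + 2 * B + 1) / (A * e ^ 2) ≤ m := by
        calc (M + 2 * B + 1) / (A * e ^ 2) ≤ m₀ := hm₀
          _ ≤ m := by exact_mod_cast le_max_left _ _
      have hAe : 0 < A * e ^ 2 := by positivity
      have hkey : M + 2 * B + 1 ≤ A * e ^ 2 * m := by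
        rw [div_le_iff₀ hAe] at hmm
        linarith
      refine ⟨2 * m, ?_⟩
      have hpow : 1 + (m:ℝ) * e ≤ ‖c‖ ^ m := by
        have := one_add_mul_le_pow (a := e) (by linarith) m
        have h1e : (1:ℝ) + e = ‖c‖ := by simp [hedef]
        rw [h1e] at this
        linarith [this]
      have hsq : ((m:ℝ) * e) ^ 2 ≤ (‖c‖ ^ m) ^ 2 := by
        have h0 : 0 ≤ (m:ℝ) * e := by positivity
        nlinarith
      have hpow2 : ((m:ℝ) * e) ^ 2 ≤ ‖c‖ ^ (2 * m) := by
        rw [two_mul, pow_add]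
        calc ((m:ℝ) * e) ^ 2 ≤ (‖c‖ ^ m) ^ 2 := hsq
          _ = ‖c‖ ^ m * ‖c‖ ^ m := sq (‖c‖ ^ m) ▸ by ring
      have hM0 : 0 < M := lt_of_lt_of_le hd hMd
      have hcast : ((2 * m : ℕ) : ℝ) = 2 * (m : ℝ) := by push_cast; ring
      rw [hcast]
      have step1 : M + 2 * (m:ℝ) * B + 1 ≤ A * e ^ 2 * m * m := by
        have h1 : (M + 2 * B + 1) * m ≤ A * e ^ 2 * m * m := by nlinarith
        nlinarith
      have step2 : A * e ^ 2 * m * m ≤ A * ‖c‖ ^ (2 * m) := by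
        have : A * ((m:ℝ) * e) ^ 2 ≤ A * ‖c‖ ^ (2 * m) :=
          mul_le_mul_of_nonneg_left hpow2 hA.le
        nlinarith
      have : M + 2 * (m:ℝ) * B < A * ‖c‖ ^ (2 * m) := by linarith
      calc M + 2 * (m:ℝ) * (β / γ) = M + 2 * (m:ℝ) * B := by rw [hBdef]
        _ < A * ‖c‖ ^ (2 * m) := this
        _ = ‖c‖ ^ (2 * m) * (d / 2) := by rw [hAdef]; ring
    obtain ⟨k, hk⟩ := hcontr
    have := le_trans (hlow k) (hup k)
    linarith
end

section
/- If f : I → E is c-almost periodic and l ∈ ℕ, then f is c^l-almost periodic. -/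
/-- a c-almost periodic function is c^l-almost periodic. -/
theorem cAlmostPeriodic_pow {E : Type*} [NormedAddCommGroup E] [NormedSpace ℂ E]
    (I : Set ℝ) (hI : I = Set.univ ∨ I = Set.Ici (0 : ℝ))
    (c : ℂ) (hc : ‖c‖ = 1) (f : ℝ → E) (hf : Continuous f)
    (l : ℕ) (hl : 1 ≤ l) (hap : CAlmostPeriodic I c f) :
    CAlmostPeriodic I (c ^ l) f := by

  intro ε hε
  have hlR : (0:ℝ) < l := by exact_mod_cast hl
  obtain ⟨L, hL, hdense⟩ := hap (ε / l) (by positivity)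
  have hclosed : ∀ t ∈ I, ∀ σ : ℝ, 0 < σ → t + σ ∈ I := by
    rcases hI with h | h <;> subst h <;> intro t ht σ hσ
    · trivial
    · exact add_nonneg ht hσ.le
  refine ⟨l * L, by positivity, ?_⟩
  intro a ha
  obtain ⟨σ, ⟨hσpos, hσper⟩, hσ1, hσ2⟩ := hdense (a / l) (by positivity)
  have key : ∀ k : ℕ, ∀ t ∈ I, ‖f (t + k * σ) - (c ^ k) • f t‖ ≤ k * (ε / l) := by
    intro k
    induction k with
    | zero => simp
    | succ k ih =>
      intro t ht
      have ht' : t + σ ∈ I := hclosed t ht σ hσpos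
      have e1 : t + (↑(k+1):ℝ) * σ = (t + σ) + k * σ := by push_cast; ring
      calc ‖f (t + (↑(k+1):ℝ) * σ) - (c ^ (k+1)) • f t‖
          = ‖(f ((t+σ) + k*σ) - (c^k) • f (t+σ)) + (c^k) • (f (t+σ) - c • f t)‖ := by
            rw [e1]; congr 1; rw [smul_sub, smul_smul, ← pow_succ]; abel
        _ ≤ ‖f ((t+σ) + k*σ) - (c^k) • f (t+σ)‖ + ‖(c^k) • (f (t+σ) - c • f t)‖ :=
            norm_add_le _ _
        _ ≤ k * (ε/l) + ε/l := by
            have h2 : ‖(c^k) • (f (t+σ) - c • f t)‖ ≤ ε/l := by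
              rw [norm_smul, norm_pow, hc, one_pow, one_mul]
              exact hσper t ht
            exact add_le_add (ih (t+σ) ht') h2
        _ = (↑(k+1)) * (ε/l) := by push_cast; ring
  refine ⟨l * σ, ⟨by positivity, ?_⟩, ?_, ?_⟩
  · intro t ht
    have := key l t ht
    have hle : (l:ℝ) * (ε/l) = ε := by field_simp
    rw [hle] at this
    exact this
  · rw [div_le_iff₀ hlR] at hσ1; linarith [mul_comm σ (l:ℝ)]
  · have h1 : (l:ℝ) * σ ≤ l * (a/l + L) := mul_le_mul_of_nonneg_left hσ2 hlR.le
    have h2 : (l:ℝ) * (a/l + L) = a + l * L := by field_simp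
    linarith
end

section
/- Suppose arg(c) = πp/q with p ∈ ℤ\{0}, q ∈ ℕ, gcd(p,q)=1 and p even. If f : I → E is c-almost periodic, then f is almost periodic (i.e., 1-almost periodic). -/
/-- if c = exp(iπp/q) with p even, gcd(p,q) = 1, then any
c-almost periodic function is almost periodic. -/
theorem cAlmostPeriodic_almostPeriodic_of_even {E : Type*} [NormedAddCommGroup E]
    [NormedSpace ℂ E]
    (I : Set ℝ) (hI : I = Set.univ ∨ I = Set.Ici (0 : ℝ))
    (p : ℤ) (q : ℕ) (hp : p ≠ 0) (hq : 0 < q) (hgcd : Int.gcd p (q : ℤ) = 1)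
    (hpeven : Even p)
    (c : ℂ) (hc : c = Complex.exp (((Real.pi : ℂ) * p / q) * Complex.I))
    (f : ℝ → E) (hf : Continuous f) (hap : CAlmostPeriodic I c f) :
    CAlmostPeriodic I 1 f := by
  -- `c ^ q = 1`
  have hq0 : (q : ℂ) ≠ 0 := Nat.cast_ne_zero.2 hq.ne'
  have hcq : c ^ q = 1 := by
    rw [hc, ← Complex.exp_nat_mul]
    have : (q : ℂ) * ((Real.pi : ℂ) * p / q * Complex.I) = (p : ℂ) * (Real.pi * Complex.I) := by
      field_simp
    rw [this, Complex.exp_int_mul, Complex.exp_pi_mul_I]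
    exact hpeven.neg_one_zpow
  have hnc : ‖c‖ = 1 := by
    rw [hc, Complex.norm_exp]
    have : ((Real.pi : ℂ) * p / q * Complex.I).re = 0 := by
      have : (Real.pi : ℂ) * p / q = ((Real.pi * p / q : ℝ) : ℂ) := by push_cast; ring
      rw [this]; simp
    rw [this, Real.exp_zero]
  have hmem : ∀ t ∈ I, ∀ s : ℝ, 0 ≤ s → t + s ∈ I := by
    rcases hI with h | h <;> intro t ht s hs <;> simp [h] at ht ⊢
    · linarith [ht]
  intro ε hε
  have hqR : (0 : ℝ) < q := Nat.cast_pos.2 hq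
  have hε' : 0 < ε / q := div_pos hε hqR
  obtain ⟨l, hl, hS⟩ := hap (ε / q) hε'
  refine ⟨q * l, by positivity, fun a ha => ?_⟩
  obtain ⟨τ, ⟨hτpos, hτ⟩, hτa, hτb⟩ := hS (a / q) (by positivity)
  have key : ∀ k : ℕ, ∀ t ∈ I, ‖f (t + k * τ) - (c ^ k) • f t‖ ≤ k * (ε / q) := by
    intro k
    induction k with
    | zero => intro t ht; simp
    | succ k ih =>
      intro t ht
      have h1 : ‖f ((t + τ) + k * τ) - (c ^ k) • f (t + τ)‖ ≤ k * (ε / q) :=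
        ih (t + τ) (hmem t ht τ hτpos.le)
      have h2 : ‖f (t + τ) - c • f t‖ ≤ ε / q := hτ t ht
      have h3 : ‖(c ^ k) • (f (t + τ) - c • f t)‖ ≤ ε / q := by
        rw [norm_smul, norm_pow, hnc, one_pow, one_mul]; exact h2
      have heq : f (t + (k + 1 : ℕ) * τ) - (c ^ (k + 1)) • f t =
          (f ((t + τ) + k * τ) - (c ^ k) • f (t + τ)) + (c ^ k) • (f (t + τ) - c • f t) := by
        have : t + ((k : ℝ) + 1) * τ = (t + τ) + k * τ := by ring
        push_cast
        rw [this, smul_sub, smul_smul, ← pow_succ]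
        abel
      calc ‖f (t + (k + 1 : ℕ) * τ) - (c ^ (k + 1)) • f t‖
          ≤ k * (ε / q) + ε / q := by rw [heq]; exact (norm_add_le _ _).trans (add_le_add h1 h3)
        _ = (k + 1 : ℕ) * (ε / q) := by push_cast; ring
  refine ⟨q * τ, ⟨by positivity, fun t ht => ?_⟩, ?_, ?_⟩
  · have := key q t ht
    rw [hcq] at this
    calc ‖f (t + q * τ) - (1 : ℂ) • f t‖ ≤ q * (ε / q) := this
      _ = ε := by field_simp
  · rw [div_le_iff₀ hqR] at hτa; linarith
  · have : τ ≤ a / q + l := hτb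
    have := mul_le_mul_of_nonneg_left this hqR.le
    rw [mul_add, mul_div_cancel₀ _ hqR.ne'] at this
    linarith
end

section
/- Suppose arg(c)/π is irrational. If f : I → E is c-almost periodic, then f is c'-almost periodic for every c' ∈ ℂ with |c'| = 1. -/
section Aux

/-- The map `x ↦ exp (x i)` is `1`-Lipschitz. -/
lemma expI_lipschitz : LipschitzWith 1 (fun x : ℝ => Complex.exp (↑x * Complex.I)) := by
  have hd : ∀ x : ℝ, HasDerivAt (fun x : ℝ => Complex.exp (↑x * Complex.I))
      (Complex.exp (↑x * Complex.I) * Complex.I) x := by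
    intro x
    have h1 : HasDerivAt (fun x : ℝ => ((x : ℂ) * Complex.I)) Complex.I x := by
      simpa using (Complex.ofRealCLM.hasDerivAt (x := x)).mul_const Complex.I
    simpa using h1.cexp
  apply lipschitzWith_of_nnnorm_deriv_le (fun x => (hd x).differentiableAt)
  intro x
  rw [(hd x).deriv]
  have : ‖Complex.exp (↑x * Complex.I) * Complex.I‖ = 1 := by
    simp [Complex.norm_exp]
  rw [← NNReal.coe_le_coe]
  simp [← norm_toNNReal, this]

/-- Density of the forward orbit of an irrational rotation. -/
lemma orbit_dense {x : ℝ} (hx : Irrational x) (y : ℝ) {ε : ℝ} (hε : 0 < ε) :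
    ∃ n : ℕ, 1 ≤ n ∧ ∃ m : ℤ, |(n : ℝ) * x - y - m| ≤ ε := by
  obtain ⟨N, hN⟩ := exists_nat_gt (1/ε)
  have hN0 : 0 < N := by
    by_contra h
    push_neg at h
    interval_cases N
    · simp at hN; nlinarith [one_div_pos.mpr hε]
  obtain ⟨j, k, hk0, hkN, hjk⟩ := Real.exists_int_int_abs_mul_sub_le x hN0
  set β : ℝ := (k : ℝ) * x - j with hβdef
  have hβε : |β| ≤ ε := by
    refine hjk.trans ?_
    rw [div_le_iff₀ (by positivity)]
    have : 1/ε < (N:ℝ) + 1 := by linarith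
    rw [div_lt_iff₀ hε] at this
    nlinarith
  have hβ0 : β ≠ 0 := by
    intro h
    apply hx
    have hk0' : (k : ℝ) ≠ 0 := Int.cast_ne_zero.mpr hk0.ne'
    refine ⟨(j : ℚ) / (k : ℚ), ?_⟩
    have hxval : x = (j : ℝ) / (k : ℝ) := by
      field_simp
      linarith [sub_eq_zero.mp h]
    push_cast
    linarith [hxval]
  rcases hβ0.lt_or_gt with hβneg | hβpos
  · -- β < 0
    set y' : ℝ := y - ⌊y⌋ - 2 with hy'def
    have hy'neg : y' < 0 := by
      have h1 := Int.fract_lt_one y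
      unfold Int.fract at h1
      simp only [hy'def]; linarith
    set M : ℤ := ⌈y' / β⌉ with hMdef
    have hMpos : 1 ≤ M := by
      have : 0 < y' / β := div_pos_of_neg_of_neg hy'neg hβneg
      have := Int.ceil_pos.mpr this
      omega
    have h4 : (y'/β) * β = y' := div_mul_cancel₀ y' (ne_of_lt hβneg)
    have h1 : (M : ℝ) * β ≤ y' := by
      have hle := Int.le_ceil (y' / β)
      rw [← hMdef] at hle
      have := mul_le_mul_of_nonpos_right hle (le_of_lt hβneg)
      rw [h4] at this
      linarith
    have h2 : y' + β < (M : ℝ) * β := by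
      have h3 := mul_lt_mul_of_neg_right (Int.ceil_lt_add_one (y' / β)) hβneg
      rw [add_mul, h4, one_mul, ← hMdef] at h3
      linarith
    refine ⟨(M * k).toNat, ?_, M * j - ⌊y⌋ - 2, ?_⟩
    · have : 1 ≤ M * k := by nlinarith [hk0, hMpos]
      omega
    · have hnn : 0 ≤ M * k := by nlinarith [hk0, hMpos]
      have hcast : (((M * k).toNat : ℕ) : ℝ) = (M : ℝ) * (k : ℝ) := by
        exact_mod_cast congrArg ((Int.cast : ℤ → ℝ)) (Int.toNat_of_nonneg hnn)
      rw [hcast]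
      have key : (M : ℝ) * (k : ℝ) * x - y - (↑(M * j - ⌊y⌋ - 2)) = (M:ℝ) * β - y' := by
        push_cast
        simp only [hβdef, hy'def]
        ring
      rw [key, abs_le]
      constructor
      · linarith [neg_abs_le β, abs_le.mp hβε]
      · linarith
  · -- β > 0
    set y' : ℝ := y - ⌊y⌋ + 1 with hy'def
    have hy'pos : 0 < y' := by
      have := Int.fract_nonneg y
      unfold Int.fract at this
      simp only [hy'def]; linarith
    set M : ℤ := ⌈y' / β⌉ with hMdef
    have hMpos : 1 ≤ M := by
      have := Int.ceil_pos.mpr (div_pos hy'pos hβpos)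
      omega
    have h4 : (y'/β) * β = y' := div_mul_cancel₀ y' (ne_of_gt hβpos)
    have h1 : y' ≤ (M : ℝ) * β := by
      have hle := Int.le_ceil (y' / β)
      rw [← hMdef] at hle
      have := mul_le_mul_of_nonneg_right hle (le_of_lt hβpos)
      rw [h4] at this
      linarith
    have h2 : (M : ℝ) * β < y' + β := by
      have h3 := mul_lt_mul_of_pos_right (Int.ceil_lt_add_one (y' / β)) hβpos
      rw [add_mul, h4, one_mul, ← hMdef] at h3
      linarith
    refine ⟨(M * k).toNat, ?_, M * j - ⌊y⌋ + 1, ?_⟩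
    · have : 1 ≤ M * k := by nlinarith [hk0, hMpos]
      omega
    · have hnn : 0 ≤ M * k := by nlinarith [hk0, hMpos]
      have hcast : (((M * k).toNat : ℕ) : ℝ) = (M : ℝ) * (k : ℝ) := by
        exact_mod_cast congrArg ((Int.cast : ℤ → ℝ)) (Int.toNat_of_nonneg hnn)
      rw [hcast]
      have key : (M : ℝ) * (k : ℝ) * x - y - (↑(M * j - ⌊y⌋ + 1)) = (M:ℝ) * β - y' := by
        push_cast
        simp only [hβdef, hy'def]
        ring
      rw [key, abs_le]
      constructor
      · linarith
      · linarith [abs_le.mp hβε]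

/-- Powers of `exp(iπφ)` with positive exponent approximate every point of the circle. -/
lemma exists_pow_close {φ : ℝ} (hφ : Irrational φ) (c' : ℂ) (hc' : ‖c'‖ = 1)
    {ε : ℝ} (hε : 0 < ε) :
    ∃ n : ℕ, 1 ≤ n ∧ ‖(Complex.exp (((Real.pi : ℂ) * φ) * Complex.I)) ^ n - c'‖ ≤ ε := by
  have hx : Irrational (φ / 2) := by
    have := hφ.div_natCast (m := 2) two_ne_zero
    simpa using this
  obtain ⟨n, hn1, m, hm⟩ := orbit_dense hx (c'.arg / (2 * Real.pi))
    (show (0:ℝ) < ε / 7 by linarith)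
  refine ⟨n, hn1, ?_⟩
  set θ := c'.arg with hθdef
  have hc'eq : c' = Complex.exp (↑θ * Complex.I) := by
    have h := Complex.norm_mul_exp_arg_mul_I c'
    rw [hc'] at h
    rw [← hθdef] at h
    simpa using h.symm
  have hpow : (Complex.exp (((Real.pi : ℂ) * φ) * Complex.I)) ^ n
      = Complex.exp (↑((n:ℝ) * Real.pi * φ) * Complex.I) := by
    rw [← Complex.exp_nat_mul]
    congr 1
    push_cast
    ring
  have hexp2 : Complex.exp (↑θ * Complex.I)
      = Complex.exp (↑(θ + 2 * Real.pi * m) * Complex.I) := by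
    rw [show (↑(θ + 2 * Real.pi * m) : ℂ) * Complex.I
        = ↑θ * Complex.I + ↑m * (2 * ↑Real.pi * Complex.I) by push_cast; ring]
    rw [Complex.exp_add, Complex.exp_int_mul_two_pi_mul_I, mul_one]
  rw [hpow, hc'eq, hexp2]
  have hlip := expI_lipschitz.dist_le_mul ((n:ℝ) * Real.pi * φ) (θ + 2 * Real.pi * m)
  rw [NNReal.coe_one, one_mul] at hlip
  have hπ := Real.pi_pos
  calc ‖Complex.exp (↑((n:ℝ) * Real.pi * φ) * Complex.I)
        - Complex.exp (↑(θ + 2 * Real.pi * m) * Complex.I)‖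
      = dist (Complex.exp (↑((n:ℝ) * Real.pi * φ) * Complex.I))
        (Complex.exp (↑(θ + 2 * Real.pi * m) * Complex.I)) := (dist_eq_norm _ _).symm
    _ ≤ dist ((n:ℝ) * Real.pi * φ) (θ + 2 * Real.pi * m) := hlip
    _ = |(n:ℝ) * Real.pi * φ - (θ + 2 * Real.pi * m)| := Real.dist_eq _ _
    _ ≤ ε := by
        have heq : (n:ℝ) * Real.pi * φ - (θ + 2 * Real.pi * m)
            = (2 * Real.pi) * ((n:ℝ) * (φ/2) - θ/(2 * Real.pi) - m) := by
          field_simp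
          ring
        rw [heq, abs_mul, abs_of_pos (by positivity : (0:ℝ) < 2 * Real.pi)]
        nlinarith [Real.pi_lt_d2, hm, abs_nonneg ((n:ℝ) * (φ/2) - θ/(2 * Real.pi) - m)]

variable {E : Type*} [NormedAddCommGroup E] [NormedSpace ℂ E]

/-- Composition of almost-periodicity constants. -/
lemma CAlmostPeriodic.mul_aux {I : Set ℝ} (hIc : ∀ t ∈ I, ∀ τ : ℝ, 0 < τ → t + τ ∈ I)
    {c₁ c₂ : ℂ} (hc₁ : ‖c₁‖ = 1) {f : ℝ → E}
    (h₁ : CAlmostPeriodic I c₁ f) (h₂ : CAlmostPeriodic I c₂ f) :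
    CAlmostPeriodic I (c₁ * c₂) f := by
  intro ε hε
  obtain ⟨l₁, hl₁, H₁⟩ := h₁ (ε/2) (by positivity)
  obtain ⟨l₂, hl₂, H₂⟩ := h₂ (ε/2) (by positivity)
  refine ⟨l₁ + l₂, by positivity, fun a ha => ?_⟩
  obtain ⟨τ₁, ⟨hτ₁pos, hτ₁⟩, h01, h02⟩ := H₁ 0 le_rfl
  obtain ⟨τ₂, ⟨hτ₂pos, hτ₂⟩, ha2, ha2'⟩ := H₂ a ha
  refine ⟨τ₂ + τ₁, ⟨by positivity, fun t ht => ?_⟩, by linarith, by linarith⟩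
  have key : f (t + (τ₂ + τ₁)) - (c₁ * c₂) • f t
      = (f ((t + τ₂) + τ₁) - c₁ • f (t + τ₂)) + c₁ • (f (t + τ₂) - c₂ • f t) := by
    rw [show t + (τ₂ + τ₁) = (t + τ₂) + τ₁ by ring, smul_sub, smul_smul]
    abel
  rw [key]
  calc ‖(f ((t + τ₂) + τ₁) - c₁ • f (t + τ₂)) + c₁ • (f (t + τ₂) - c₂ • f t)‖
      ≤ ‖f ((t + τ₂) + τ₁) - c₁ • f (t + τ₂)‖ + ‖c₁ • (f (t + τ₂) - c₂ • f t)‖ :=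
        norm_add_le _ _
    _ ≤ ε/2 + ε/2 := by
        gcongr ?_ + ?_
        · exact hτ₁ (t + τ₂) (hIc t ht τ₂ hτ₂pos)
        · rw [norm_smul, hc₁, one_mul]
          exact hτ₂ t ht
    _ = ε := by ring

/-- `f` is `cⁿ`-almost periodic for every `n ≥ 1`. -/
lemma cAlmostPeriodic_pow_s9 {I : Set ℝ} (hIc : ∀ t ∈ I, ∀ τ : ℝ, 0 < τ → t + τ ∈ I)
    {c : ℂ} (hc1 : ‖c‖ = 1) {f : ℝ → E} (hap : CAlmostPeriodic I c f) :
    ∀ n : ℕ, 1 ≤ n → CAlmostPeriodic I (c ^ n) f := by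
  intro n hn
  induction n with
  | zero => omega
  | succ n ih =>
    rcases Nat.eq_or_lt_of_le hn with h | h
    · rw [← h, pow_one]; exact hap
    · have hn' : 1 ≤ n := by omega
      rw [pow_succ, mul_comm]
      exact CAlmostPeriodic.mul_aux hIc hc1 hap (ih hn')

/-- A `c`-almost periodic continuous function is bounded on `I`. -/
lemma cAlmostPeriodic_bounded {I : Set ℝ} (hI0 : ∀ u : ℝ, 0 ≤ u → u ∈ I)
    {c : ℂ} (hc1 : ‖c‖ = 1) {f : ℝ → E} (hf : Continuous f)
    (hap : CAlmostPeriodic I c f) :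
    ∃ M : ℝ, 0 ≤ M ∧ ∀ t ∈ I, ‖f t‖ ≤ M := by
  obtain ⟨l, hl, H⟩ := hap 1 one_pos
  obtain ⟨s, hs, hsmax⟩ := (isCompact_Icc (a := (0:ℝ)) (b := l)).exists_isMaxOn
    (Set.nonempty_Icc.mpr hl.le) (hf.norm.continuousOn)
  set M := ‖f s‖ with hM
  have hM0 : 0 ≤ M := norm_nonneg _
  refine ⟨M + 1, by linarith, fun t ht => ?_⟩
  rcases lt_or_ge t 0 with h1 | h1
  · -- t < 0
    obtain ⟨τ, ⟨hτpos, hτ⟩, haτ, haτ'⟩ := H (-t) (by linarith)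
    have hbound := hτ t ht
    have hmem : t + τ ∈ Set.Icc (0:ℝ) l := ⟨by linarith, by linarith⟩
    have hfs : ‖f (t + τ)‖ ≤ M := hsmax hmem
    have heq : ‖f t‖ = ‖c • f t‖ := by rw [norm_smul, hc1, one_mul]
    have h5 : ‖c • f t‖ ≤ ‖f (t + τ)‖ + 1 := by
      calc ‖c • f t‖ = ‖f (t + τ) - (f (t + τ) - c • f t)‖ := by congr 1; abel
        _ ≤ ‖f (t + τ)‖ + ‖f (t + τ) - c • f t‖ := norm_sub_le _ _
        _ ≤ ‖f (t + τ)‖ + 1 := by linarith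
    linarith
  · rcases le_or_gt t l with h2 | h2
    · exact le_trans (hsmax ⟨h1, h2⟩) (by linarith)
    · -- t > l
      obtain ⟨τ, ⟨hτpos, hτ⟩, haτ, haτ'⟩ := H (t - l) (by linarith)
      have hτt : τ ≤ t := by linarith
      have hu0 : 0 ≤ t - τ := by linarith
      have hul : t - τ ≤ l := by linarith
      have huI : t - τ ∈ I := hI0 _ hu0
      have hbound := hτ (t - τ) huI
      rw [show t - τ + τ = t by ring] at hbound
      have hfu : ‖f (t - τ)‖ ≤ M := hsmax ⟨hu0, hul⟩
      calc ‖f t‖ = ‖(f t - c • f (t - τ)) + c • f (t - τ)‖ := by congr 1; abel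
        _ ≤ ‖f t - c • f (t - τ)‖ + ‖c • f (t - τ)‖ := norm_add_le _ _
        _ ≤ 1 + M := by
            rw [norm_smul, hc1, one_mul]
            exact add_le_add hbound hfu
        _ = M + 1 := by ring

end Aux

/-- if c = exp(iπφ) with φ irrational, then a c-almost periodic function
is c'-almost periodic for every c' on the unit circle. -/
theorem cAlmostPeriodic_all_of_irrational {E : Type*} [NormedAddCommGroup E]
    [NormedSpace ℂ E]
    (I : Set ℝ) (hI : I = Set.univ ∨ I = Set.Ici (0 : ℝ))
    (φ : ℝ) (hφ : Irrational φ) (hφmem : φ ∈ Set.Ioc (-Real.pi) Real.pi)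
    (c : ℂ) (hc : c = Complex.exp (((Real.pi : ℂ) * φ) * Complex.I))
    (f : ℝ → E) (hf : Continuous f) (hap : CAlmostPeriodic I c f) :
    ∀ c' : ℂ, ‖c'‖ = 1 → CAlmostPeriodic I c' f := by
  have hc1 : ‖c‖ = 1 := by
    rw [hc, Complex.norm_exp]
    norm_num [Complex.mul_I_re, Complex.mul_re, Complex.I_re]
  have hIc : ∀ t ∈ I, ∀ τ : ℝ, 0 < τ → t + τ ∈ I := by
    rcases hI with h | h <;> subst h
    · intro t _ τ _; trivial
    · intro t ht τ hτ
      simp only [Set.mem_Ici] at ht ⊢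
      linarith
  have hI0 : ∀ u : ℝ, 0 ≤ u → u ∈ I := by
    rcases hI with h | h <;> subst h
    · intro u _; trivial
    · intro u hu; exact hu
  obtain ⟨M, hM0, hM⟩ := cAlmostPeriodic_bounded hI0 hc1 hf hap
  intro c' hc' ε hε
  have hε' : (0:ℝ) < ε / (2 * (M + 1)) := by positivity
  obtain ⟨n, hn1, hclose⟩ := exists_pow_close hφ c' hc' hε'
  rw [← hc] at hclose
  obtain ⟨l, hl, H⟩ := cAlmostPeriodic_pow_s9 hIc hc1 hap n hn1 (ε/2) (by positivity)
  refine ⟨l, hl, fun a ha => ?_⟩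
  obtain ⟨τ, ⟨hτpos, hτ⟩, h1, h2⟩ := H a ha
  refine ⟨τ, ⟨hτpos, fun t ht => ?_⟩, h1, h2⟩
  have key : f (t + τ) - c' • f t = (f (t + τ) - (c ^ n) • f t) + (c ^ n - c') • f t := by
    rw [sub_smul]; abel
  rw [key]
  calc ‖(f (t + τ) - (c ^ n) • f t) + (c ^ n - c') • f t‖
      ≤ ‖f (t + τ) - (c ^ n) • f t‖ + ‖(c ^ n - c') • f t‖ := norm_add_le _ _
    _ ≤ ε/2 + ε/2 := by
        gcongr ?_ + ?_
        · exact hτ t ht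
        · rw [norm_smul]
          calc ‖c ^ n - c'‖ * ‖f t‖ ≤ (ε / (2 * (M + 1))) * M :=
                mul_le_mul hclose (hM t ht) (norm_nonneg _) (le_of_lt hε')
            _ ≤ ε/2 := by
                rw [div_mul_eq_mul_div, div_le_iff₀ (by positivity)]
                nlinarith
    _ = ε := by ring
end

section
/- Suppose arg(c)/π is irrational. If f : I → E is bounded and c-uniformly recurrent, then f is c'-uniformly recurrent for every c' on the unit circle. -/
-- L2: integer powers dense
lemma zpow_dense (φ : ℝ) (hφ : Irrational φ) (c : ℂ)
    (hc : c = Complex.exp (((Real.pi : ℂ) * φ) * Complex.I))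
    (z : ℂ) (hz : ‖z‖ = 1) (ε : ℝ) (hε : 0 < ε) : ∃ m : ℤ, ‖c ^ m - z‖ < ε := by
  set S : AddSubgroup ℝ := AddSubgroup.closure {Real.pi * φ, 2 * Real.pi} with hS
  have hdense : Dense (S : Set ℝ) := by
    rcases S.dense_or_cyclic with h | ⟨a, ha⟩
    · exact h
    · exfalso
      have h1 : Real.pi * φ ∈ S := AddSubgroup.subset_closure (by simp)
      have h2 : 2 * Real.pi ∈ S := AddSubgroup.subset_closure (by simp)
      rw [ha, AddSubgroup.mem_closure_singleton] at h1 h2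
      obtain ⟨m, hm⟩ := h1
      obtain ⟨n, hn⟩ := h2
      rw [zsmul_eq_mul] at hm hn
      have hn0 : (n : ℝ) ≠ 0 := by
        rintro h
        rw [h, zero_mul] at hn
        have := Real.pi_pos
        nlinarith
      have : φ = (2 * m : ℝ) / n := by
        have hπ := Real.pi_ne_zero
        have key : φ * n = 2 * m := by
          have h1' : (n:ℝ) * (Real.pi * φ) = (n:ℝ) * ((m:ℝ) * a) := by rw [hm]
          have h2' : (m:ℝ) * (2 * Real.pi) = (m:ℝ) * ((n:ℝ) * a) := by rw [hn]
          have : Real.pi * (φ * n) = Real.pi * (2 * m) := by nlinarith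
          exact mul_left_cancel₀ hπ this
        field_simp
        linarith
      exact hφ ⟨(2 * m : ℚ) / n, by rw [this]; push_cast; ring⟩
  -- z = exp(arg z * I)
  have hz' : Complex.exp ((Complex.arg z : ℂ) * Complex.I) = z := by
    have := Complex.norm_mul_exp_arg_mul_I z
    rwa [hz, Complex.ofReal_one, one_mul] at this
  have hcont : Continuous (fun t : ℝ => Complex.exp ((t : ℂ) * Complex.I)) := by
    continuity
  have hca := (hcont.tendsto (Complex.arg z)).eventually (Metric.ball_mem_nhds _ hε)
  rw [Metric.eventually_nhds_iff] at hca
  obtain ⟨δ, hδ, hδ'⟩ := hca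
  obtain ⟨s, hsS, hsd⟩ := Metric.mem_closure_iff.mp (hdense (Complex.arg z)) δ hδ
  rw [SetLike.mem_coe, AddSubgroup.mem_closure_pair] at hsS
  obtain ⟨m, n, hmn⟩ := hsS
  refine ⟨m, ?_⟩
  have hgs : Complex.exp ((s : ℂ) * Complex.I) = c ^ m := by
    have hs : (s : ℂ) = (m : ℂ) * ((Real.pi : ℂ) * φ * Complex.I) / Complex.I
        + (n : ℂ) * (2 * (Real.pi : ℂ) * Complex.I) / Complex.I := by
      rw [← hmn]
      push_cast [zsmul_eq_mul]
      field_simp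
    rw [hs, ← add_div, div_mul_cancel₀ _ Complex.I_ne_zero, Complex.exp_add,
      Complex.exp_int_mul, Complex.exp_int_mul_two_pi_mul_I, mul_one, hc]
  have := hδ' (show dist s (Complex.arg z) < δ by
    rw [Real.dist_eq, abs_sub_comm]; rwa [Real.dist_eq] at hsd)
  rw [hgs, hz'] at this
  rwa [dist_eq_norm] at this


-- telescoping pow bound
lemma pow_sub_pow_norm (a b : ℂ) (ha : ‖a‖ = 1) (hb : ‖b‖ = 1) (k : ℕ) :
    ‖a ^ k - b ^ k‖ ≤ k * ‖a - b‖ := by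
  induction k with
  | zero => simp
  | succ k ih =>
    have : a ^ (k+1) - b ^ (k+1) = a ^ k * (a - b) + (a ^ k - b ^ k) * b := by ring
    calc ‖a ^ (k+1) - b ^ (k+1)‖ ≤ ‖a ^ k * (a - b)‖ + ‖(a ^ k - b ^ k) * b‖ := by
          rw [this]; exact norm_add_le _ _
      _ = ‖a - b‖ + ‖a ^ k - b ^ k‖ := by
          rw [norm_mul, norm_mul, norm_pow, ha, hb, one_pow, one_mul, mul_one]
      _ ≤ ‖a - b‖ + k * ‖a - b‖ := by linarith
      _ = (k + 1 : ℕ) * ‖a - b‖ := by push_cast; ring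

-- pigeonhole: powers come back near 1
lemma exists_pow_near_one (c : ℂ) (hc : ‖c‖ = 1) (δ : ℝ) (hδ : 0 < δ) :
    ∃ d : ℕ, 1 ≤ d ∧ ‖c ^ d - 1‖ < δ := by
  have hmem : ∀ n : ℕ, c ^ n ∈ Metric.sphere (0 : ℂ) 1 := by
    intro n
    simp
    simp [hc]
  obtain ⟨x, -, ψ, hψ, hlim⟩ := (isCompact_sphere (0:ℂ) 1).tendsto_subseq hmem
  rw [Metric.tendsto_atTop] at hlim
  obtain ⟨N, hN⟩ := hlim (δ/2) (by linarith)
  have h1 := hN N le_rfl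
  have h2 := hN (N+1) (by omega)
  have hlt : ψ N < ψ (N+1) := hψ (by omega)
  refine ⟨ψ (N+1) - ψ N, by omega, ?_⟩
  have key : ‖c ^ (ψ (N+1)) - c ^ (ψ N)‖ < δ := by
    have := dist_triangle (c ^ (ψ (N+1))) x (c ^ (ψ N))
    rw [dist_comm x (c ^ (ψ N))] at this
    rw [← dist_eq_norm]
    calc dist (c ^ ψ (N+1)) (c ^ ψ N) ≤ _ + _ := this
      _ < δ/2 + δ/2 := add_lt_add h2 h1
      _ = δ := by ring
  have hfac : c ^ (ψ (N+1)) - c ^ (ψ N) = c ^ (ψ N) * (c ^ (ψ (N+1) - ψ N) - 1) := by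
    rw [mul_sub, mul_one, ← pow_add]
    congr 2
    omega
  rwa [hfac, norm_mul, norm_pow, hc, one_pow, one_mul] at key

lemma natpow_dense_of_zpow_dense (c : ℂ) (hc : ‖c‖ = 1)
    (hz : ∀ z : ℂ, ‖z‖ = 1 → ∀ ε > 0, ∃ m : ℤ, ‖c ^ m - z‖ < ε)
    (z : ℂ) (hzn : ‖z‖ = 1) (ε : ℝ) (hε : 0 < ε) : ∃ n : ℕ, ‖c ^ n - z‖ < ε := by
  have hc0 : c ≠ 0 := by intro h; rw [h, norm_zero] at hc; norm_num at hc
  obtain ⟨m, hm⟩ := hz z hzn (ε/2) (by linarith)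
  rcases le_or_gt 0 m with hm0 | hm0
  · refine ⟨m.toNat, ?_⟩
    have : (c : ℂ) ^ m = c ^ m.toNat := by
      rw [← zpow_natCast, Int.toNat_of_nonneg hm0]
    rw [this] at hm
    linarith [hm, norm_nonneg (c ^ m.toNat - z)]
  · set k : ℕ := (-m).toNat with hk
    have hk1 : 1 ≤ k := by omega
    have hkpos : (0:ℝ) < k := by exact_mod_cast hk1
    obtain ⟨d, hd1, hd⟩ := exists_pow_near_one c hc (ε/(2*k)) (by positivity)
    have hcinv : ‖c⁻¹‖ = 1 := by rw [norm_inv, hc]; norm_num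
    have hstep : ‖c ^ (d-1) - c⁻¹‖ < ε/(2*k) := by
      have : c ^ (d-1) - c⁻¹ = c⁻¹ * (c ^ d - 1) := by
        rw [mul_sub, mul_one, ← pow_sub_one_mul (by omega : d ≠ 0) c]
        ring_nf
        rw [mul_comm c (c ^ (d-1)), mul_assoc, mul_inv_cancel₀ hc0, mul_one]
      rwa [this, norm_mul, hcinv, one_mul]
    have hpk : ‖(c ^ (d-1)) ^ k - (c⁻¹) ^ k‖ ≤ k * ‖c ^ (d-1) - c⁻¹‖ :=
      pow_sub_pow_norm _ _ (by rw [norm_pow, hc, one_pow]) hcinv k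
    have hck : (c⁻¹) ^ k = c ^ m := by
      rw [inv_pow, ← zpow_natCast, ← zpow_neg]
      congr 1
      omega
    refine ⟨(d-1) * k, ?_⟩
    have h1 : ‖c ^ ((d-1)*k) - c ^ m‖ < ε/2 := by
      rw [pow_mul, ← hck]
      calc ‖(c ^ (d-1)) ^ k - (c⁻¹) ^ k‖ ≤ k * ‖c ^ (d-1) - c⁻¹‖ := hpk
        _ < k * (ε/(2*k)) := by
            apply mul_lt_mul_of_pos_left hstep hkpos
        _ = ε/2 := by field_simp
    calc ‖c ^ ((d-1)*k) - z‖ ≤ ‖c ^ ((d-1)*k) - c ^ m‖ + ‖c ^ m - z‖ := by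
          simpa using norm_sub_le_norm_sub_add_norm_sub (c ^ ((d-1)*k)) (c ^ m) z
      _ < ε/2 + ε/2 := add_lt_add h1 hm
      _ = ε := by ring


lemma iter_bound {E : Type*} [NormedAddCommGroup E] [NormedSpace ℂ E]
    (I : Set ℝ) (hIadd : ∀ t ∈ I, ∀ s : ℝ, 0 ≤ s → t + s ∈ I)
    (c : ℂ) (hc : ‖c‖ = 1) (f : ℝ → E) (α : ℕ → ℝ) (hpos : ∀ n, 0 < α n)
    (N : ℕ) (δ : ℝ) (hδ : ∀ n ≥ N, ∀ t ∈ I, ‖f (t + α n) - c • f t‖ ≤ δ) :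
    ∀ k : ℕ, ∀ t ∈ I, ‖f (t + ∑ i ∈ Finset.range k, α (N + i)) - (c ^ k) • f t‖ ≤ k * δ := by
  intro k
  induction k with
  | zero => intro t ht; simp
  | succ k ih =>
    intro t ht
    set S := ∑ i ∈ Finset.range k, α (N + i) with hS
    have hSnn : 0 ≤ S := Finset.sum_nonneg fun i _ => (hpos _).le
    have htS : t + S ∈ I := hIadd t ht S hSnn
    have hsum : t + ∑ i ∈ Finset.range (k+1), α (N + i) = (t + S) + α (N + k) := by
      rw [hS, Finset.sum_range_succ]; ring
    have h1 : ‖f ((t + S) + α (N + k)) - c • f (t + S)‖ ≤ δ :=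
      hδ (N + k) (Nat.le_add_right _ _) (t + S) htS
    have h2 : ‖c • f (t + S) - (c ^ (k+1)) • f t‖ ≤ k * δ := by
      have : c • f (t + S) - (c ^ (k+1)) • f t = c • (f (t + S) - (c ^ k) • f t) := by
        rw [smul_sub, smul_smul, ← pow_succ']
      rw [this, norm_smul, hc, one_mul]
      exact ih t ht
    calc ‖f (t + ∑ i ∈ Finset.range (k+1), α (N + i)) - (c ^ (k+1)) • f t‖
        = ‖(f ((t + S) + α (N + k)) - c • f (t + S)) + (c • f (t + S) - (c ^ (k+1)) • f t)‖ := by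
          rw [hsum]; congr 1; abel
      _ ≤ ‖f ((t + S) + α (N + k)) - c • f (t + S)‖ + ‖c • f (t + S) - (c ^ (k+1)) • f t‖ :=
          norm_add_le _ _
      _ ≤ δ + k * δ := add_le_add h1 h2
      _ = (k + 1 : ℕ) * δ := by push_cast; ring

/-- if c = exp(iπφ) with φ irrational and f is bounded and c-uniformly
recurrent, then f is c'-uniformly recurrent for every c' on the unit circle. -/
theorem cUniformlyRecurrent_all_of_irrational {E : Type*} [NormedAddCommGroup E]
    [NormedSpace ℂ E]
    (I : Set ℝ) (hI : I = Set.univ ∨ I = Set.Ici (0 : ℝ))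
    (φ : ℝ) (hφ : Irrational φ) (hφmem : φ ∈ Set.Ioc (-Real.pi) Real.pi)
    (c : ℂ) (hc : c = Complex.exp (((Real.pi : ℂ) * φ) * Complex.I))
    (f : ℝ → E) (hf : Continuous f)
    (hbd : ∃ M : ℝ, ∀ t ∈ I, ‖f t‖ ≤ M)
    (hur : CUniformlyRecurrent I c f) :
    ∀ c' : ℂ, ‖c'‖ = 1 → CUniformlyRecurrent I c' f := by
  intro c' hc'
  have hcnorm : ‖c‖ = 1 := by
    rw [hc, Complex.norm_exp]
    simp
  have hc0 : c ≠ 0 := by intro h; rw [h, norm_zero] at hcnorm; norm_num at hcnorm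
  have hIadd : ∀ t ∈ I, ∀ s : ℝ, 0 ≤ s → t + s ∈ I := by
    rcases hI with h | h <;> subst h <;> intro t ht s hs
    · trivial
    · exact add_nonneg ht hs
  obtain ⟨M, hM⟩ := hbd
  set M₀ : ℝ := max M 0 with hM₀def
  have hM₀ : ∀ t ∈ I, ‖f t‖ ≤ M₀ := fun t ht => (hM t ht).trans (le_max_left _ _)
  have hM₀0 : (0:ℝ) ≤ M₀ := le_max_right _ _
  obtain ⟨α, hαmono, hαpos, hαtop, hαerr⟩ := hur
  -- density of positive powers of c
  have hdense : ∀ ε > 0, ∃ k : ℕ, 1 ≤ k ∧ ‖c ^ k - c'‖ < ε := by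
    intro ε hε
    have hzc : ‖c' * c⁻¹‖ = 1 := by
      rw [norm_mul, norm_inv, hcnorm, hc']; norm_num
    obtain ⟨n, hn⟩ := natpow_dense_of_zpow_dense c hcnorm
      (fun z hz ε' hε' => zpow_dense φ hφ c hc z hz ε' hε') (c' * c⁻¹) hzc ε hε
    refine ⟨n + 1, by omega, ?_⟩
    have heq : c ^ (n+1) - c' = (c ^ n - c' * c⁻¹) * c := by
      rw [sub_mul, pow_succ, mul_assoc, inv_mul_cancel₀ hc0, mul_one]
    rw [heq, norm_mul, hcnorm, mul_one]
    exact hn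
  -- key claim
  have key : ∀ (m : ℕ) (b : ℝ), ∃ τ : ℝ, b + 1 < τ ∧ 0 < τ ∧
      ∀ t ∈ I, ‖f (t + τ) - c' • f t‖ ≤ 1 / (m + 1) := by
    intro m b
    have hε : (0:ℝ) < 1 / (m + 1) := by positivity
    set ε : ℝ := 1 / (m + 1) with hεdef
    obtain ⟨k, hk1, hk⟩ := hdense (ε / (2 * (M₀ + 1))) (by positivity)
    have hkpos : (0:ℝ) < k := by exact_mod_cast hk1
    obtain ⟨N₁, hN₁⟩ := hαerr (ε / (2 * k)) (by positivity)
    obtain ⟨N₂, hN₂⟩ := (Filter.tendsto_atTop.mp hαtop (max (b + 1) 0 + 1)).exists_forall_of_atTop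
    set N := max N₁ N₂ with hN
    set τ := ∑ i ∈ Finset.range k, α (N + i) with hτ
    have hαNτ : α N ≤ τ := by
      have := Finset.single_le_sum (f := fun i => α (N + i))
        (fun i _ => (hαpos _).le) (Finset.mem_range.mpr (by omega : 0 < k))
      simpa using this
    have hαN : max (b + 1) 0 + 1 ≤ α N := hN₂ N (le_max_right _ _)
    have hbτ : b + 1 < τ := by
      have := le_max_left (b + 1) (0:ℝ)
      linarith
    have hτpos : 0 < τ := by
      have := le_max_right (b + 1) (0:ℝ)
      linarith
    refine ⟨τ, hbτ, hτpos, ?_⟩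
    intro t ht
    have hiter := iter_bound I hIadd c hcnorm f α hαpos N (ε / (2 * k))
      (fun n hn => hN₁ n (le_trans (le_max_left _ _) hn)) k t ht
    have h1 : ‖f (t + τ) - (c ^ k) • f t‖ ≤ ε / 2 := by
      refine hiter.trans ?_
      rw [mul_div_assoc']
      rw [div_le_div_iff₀ (by positivity) (by norm_num)]
      ring_nf
      nlinarith [hε.le]
    have h2 : ‖(c ^ k) • f t - c' • f t‖ ≤ ε / 2 := by
      rw [← sub_smul, norm_smul]
      calc ‖c ^ k - c'‖ * ‖f t‖ ≤ (ε / (2 * (M₀ + 1))) * (M₀ + 1) := by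
            apply mul_le_mul hk.le ((hM₀ t ht).trans (by linarith)) (norm_nonneg _) (by positivity)
        _ = ε / 2 := by field_simp
    calc ‖f (t + τ) - c' • f t‖
        ≤ ‖f (t + τ) - (c ^ k) • f t‖ + ‖(c ^ k) • f t - c' • f t‖ := by
          simpa using norm_sub_le_norm_sub_add_norm_sub (f (t + τ)) ((c ^ k) • f t) (c' • f t)
      _ ≤ ε / 2 + ε / 2 := add_le_add h1 h2
      _ = ε := by ring
  choose g hg1 hg2 hg3 using key
  set β : ℕ → ℝ := fun m => Nat.rec (g 0 0) (fun m ih => g (m + 1) ih) m with hβ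
  have hβ0 : β 0 = g 0 0 := rfl
  have hβsucc : ∀ m, β (m + 1) = g (m + 1) (β m) := fun m => rfl
  have hβlt : ∀ m, β m + 1 < β (m + 1) := fun m => by rw [hβsucc]; exact hg1 (m + 1) (β m)
  have hβerr : ∀ m, ∀ t ∈ I, ‖f (t + β m) - c' • f t‖ ≤ 1 / (m + 1) := by
    intro m
    cases m with
    | zero => exact hg3 0 0
    | succ m => rw [hβsucc]; exact hg3 (m + 1) (β m)
  refine ⟨β, strictMono_nat_of_lt_succ (fun m => by linarith [hβlt m]), ?_, ?_, ?_⟩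
  · intro m
    cases m with
    | zero => exact hg2 0 0
    | succ m => rw [hβsucc]; exact hg2 (m + 1) (β m)
  · have hlb : ∀ m : ℕ, β 0 + m ≤ β m := by
      intro m
      induction m with
      | zero => simp
      | succ m ih => push_cast; have := hβlt m; linarith
    exact Filter.tendsto_atTop_mono hlb
      (Filter.tendsto_atTop_add_const_left _ _ tendsto_natCast_atTop_atTop)
  · intro ε hε
    obtain ⟨Nn, hNn⟩ := exists_nat_one_div_lt hε
    refine ⟨Nn, fun m hm t ht => ?_⟩
    have h1 : (1:ℝ) / (m + 1) ≤ 1 / (Nn + 1) := by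
      apply one_div_le_one_div_of_le (by positivity)
      exact_mod_cast Nat.succ_le_succ hm
    exact (hβerr m t ht).trans (h1.trans hNn.le)
end

section
/- If f is semi-c-periodic with arg(c) = πp/q rational (gcd(p,q)=1), then f is c-almost periodic. -/
/-- a semi-c-periodic function with c = exp(iπp/q), gcd(p,q) = 1,
is c-almost periodic. -/
theorem semiCPeriodic_cAlmostPeriodic {E : Type*} [NormedAddCommGroup E] [NormedSpace ℂ E]
    (I : Set ℝ) (hI : I = Set.univ ∨ I = Set.Ici (0 : ℝ))
    (p : ℤ) (q : ℕ) (hp : p ≠ 0) (hq : 0 < q) (hgcd : Int.gcd p (q : ℤ) = 1)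
    (c : ℂ) (hc : c = Complex.exp (((Real.pi : ℂ) * p / q) * Complex.I))
    (f : ℝ → E) (hf : Continuous f)
    (hsemi : ∀ ε > 0, ∃ p₀ > 0, ∀ m : ℕ, ∀ x ∈ I, ‖f (x + m * p₀) - c ^ m • f x‖ ≤ ε) :
    CAlmostPeriodic I c f := by
  intro ε hε
  obtain ⟨p₀, hp₀, hper⟩ := hsemi ε hε
  have hq0 : (q : ℂ) ≠ 0 := by exact_mod_cast hq.ne'
  have hc2q : c ^ (2 * q) = 1 := by
    rw [hc, ← Complex.exp_nat_mul]
    have : ((2 * q : ℕ) : ℂ) * ((↑Real.pi * ↑p / ↑q) * Complex.I)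
        = (p : ℂ) * (2 * ↑Real.pi * Complex.I) := by
      push_cast
      field_simp
    rw [this, Complex.exp_int_mul_two_pi_mul_I]
  have hcm : ∀ l : ℕ, c ^ (1 + 2 * l * q) = c := by
    intro l
    have : 2 * l * q = (2 * q) * l := by ring
    rw [pow_add, pow_one, this, pow_mul, hc2q, one_pow, mul_one]
  refine ⟨(2 * q + 1) * p₀, by positivity, ?_⟩
  intro a ha
  have hd0 : (0 : ℝ) < 2 * q * p₀ := by positivity
  set l : ℕ := ⌈a / (2 * q * p₀)⌉₊ with hl
  refine ⟨((1 + 2 * l * q : ℕ) : ℝ) * p₀, ⟨by positivity, ?_⟩, ?_, ?_⟩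
  · intro t ht
    have := hper (1 + 2 * l * q) t ht
    rwa [hcm l] at this
  · have h1 : a / (2 * q * p₀) ≤ (l : ℝ) := Nat.le_ceil _
    have h1' : a ≤ (l : ℝ) * (2 * q * p₀) := (div_le_iff₀ hd0).mp h1
    push_cast
    nlinarith
  · have h2 : (l : ℝ) < a / (2 * q * p₀) + 1 := Nat.ceil_lt_add_one (by positivity)
    have h2' : (l : ℝ) * (2 * q * p₀) < a + 2 * q * p₀ := by
      have := (mul_lt_mul_of_pos_right h2 hd0)
      rwa [add_mul, one_mul, div_mul_cancel₀ _ hd0.ne'] at this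
    push_cast
    nlinarith
end

section
/- If f : I → ℂ is c-almost periodic and inf_{t∈I} |f(t)| = m > 0, then 1/f is (1/c)-almost periodic. -/
/-- the reciprocal of a c-almost periodic function bounded below in
modulus is 1/c-almost periodic. -/
theorem cAlmostPeriodic_inv (I : Set ℝ) (hI : I = Set.univ ∨ I = Set.Ici (0 : ℝ))
    (c : ℂ) (hc : ‖c‖ = 1) (f : ℝ → ℂ) (hf : Continuous f)
    (m : ℝ) (hm : 0 < m) (hlow : ∀ t ∈ I, m ≤ ‖f t‖)
    (hap : CAlmostPeriodic I c f) :
    CAlmostPeriodic I c⁻¹ (fun t => (f t)⁻¹) := by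
  intro ε hε
  obtain ⟨l, hl, h⟩ := hap (ε * m ^ 2) (by positivity)
  refine ⟨l, hl, fun a ha => ?_⟩
  obtain ⟨τ, ⟨hτ0, hτ⟩, hab⟩ := h a ha
  refine ⟨τ, ⟨hτ0, fun t ht => ?_⟩, hab⟩
  have htτ : t + τ ∈ I := by
    rcases hI with hIe | hIe <;> subst hIe
    · trivial
    · simp only [Set.mem_Ici] at ht ⊢; linarith
  have hb := hlow t ht
  have ha' := hlow _ htτ
  have hb0 : f t ≠ 0 := fun h0 => by rw [h0, norm_zero] at hb; linarith
  have ha0 : f (t + τ) ≠ 0 := fun h0 => by rw [h0, norm_zero] at ha'; linarith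
  have hc0 : c ≠ 0 := fun h0 => by rw [h0, norm_zero] at hc; linarith
  have key := hτ t ht
  simp only [smul_eq_mul] at key ⊢
  have heq : (f (t + τ))⁻¹ - c⁻¹ * (f t)⁻¹
      = (c * f t - f (t + τ)) / (f (t + τ) * (c * f t)) := by
    field_simp
  rw [heq, norm_div, norm_sub_rev, norm_mul, norm_mul, hc, one_mul]
  rw [div_le_iff₀ (mul_pos (hm.trans_le ha') (hm.trans_le hb))]
  have hmm : m * m ≤ ‖f (t + τ)‖ * ‖f t‖ :=
    mul_le_mul ha' hb hm.le (norm_nonneg _)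
  nlinarith
end

section
/- If f : I → ℝ is c-uniformly recurrent (c on the unit circle) and f is not identically 0, then c = 1 or c = −1. Moreover, if additionally f(t) ≥ 0 for all t ∈ I, then c = 1. -/
/-- a nonzero real-valued c-uniformly recurrent function forces
c = 1 or c = -1; if moreover f ≥ 0, then c = 1. -/
theorem real_cUniformlyRecurrent_pm_one
    (I : Set ℝ) (hI : I = Set.univ ∨ I = Set.Ici (0 : ℝ))
    (c : ℂ) (hc : ‖c‖ = 1) (f : ℝ → ℝ) (hf : Continuous f)
    (hur : CUniformlyRecurrent I c (fun t => (f t : ℂ)))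
    (hne : ∃ t ∈ I, f t ≠ 0) :
    (c = 1 ∨ c = -1) ∧ ((∀ t ∈ I, 0 ≤ f t) → c = 1) := by
  obtain ⟨t₀, ht₀I, ht₀⟩ := hne
  obtain ⟨α, hmono, hpos, htend, happ⟩ := hur
  -- imaginary part of c is 0
  have him : c.im = 0 := by
    by_contra h
    have hεpos : 0 < |c.im * f t₀| := abs_pos.mpr (mul_ne_zero h ht₀)
    obtain ⟨N, hN⟩ := happ (|c.im * f t₀| / 2) (by positivity)
    have hb := hN N le_rfl t₀ ht₀I
    have him_le : |c.im * f t₀| ≤ ‖((f (t₀ + α N) : ℂ)) - c • ((f t₀ : ℝ) : ℂ)‖ := by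
      have h1 := Complex.abs_im_le_norm (((f (t₀ + α N) : ℂ)) - c • ((f t₀ : ℝ) : ℂ))
      have h2 : (((f (t₀ + α N) : ℂ)) - c • ((f t₀ : ℝ) : ℂ)).im = -(c.im * f t₀) := by
        simp [Complex.sub_im, Complex.mul_im, smul_eq_mul]
      rw [h2] at h1
      simpa [Complex.norm_def] using h1
    simp only at hb
    linarith
  have hre : c.re = 1 ∨ c.re = -1 := by
    have h1 : c.re ^ 2 + c.im ^ 2 = 1 := by
      have := Complex.sq_norm c
      rw [Complex.sq_norm] at this
      have h2 : ‖c‖ = 1 := hc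
      have := Complex.normSq_apply c
      nlinarith [Complex.sq_norm c, congrArg (· ^ 2) h2, Complex.normSq_apply c,
        Complex.sq_norm c]
    have : (c.re - 1) * (c.re + 1) = 0 := by nlinarith
    rcases mul_eq_zero.mp this with h | h
    · left; linarith
    · right; linarith
  have hpm : c = 1 ∨ c = -1 := by
    rcases hre with h | h
    · left; exact Complex.ext h (by simpa using him)
    · right; exact Complex.ext (by simpa using h) (by simpa using him)
  refine ⟨hpm, fun hnn => ?_⟩
  rcases hpm with h | h
  · exact h
  · exfalso
    subst h
    have hft₀ : 0 < f t₀ := lt_of_le_of_ne (hnn t₀ ht₀I) (Ne.symm ht₀)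
    obtain ⟨N, hN⟩ := happ (f t₀ / 2) (by positivity)
    have hb := hN N le_rfl t₀ ht₀I
    have hmem : t₀ + α N ∈ I := by
      rcases hI with rfl | rfl
      · trivial
      · exact add_nonneg ht₀I (hpos N).le
    have hfn : 0 ≤ f (t₀ + α N) := hnn _ hmem
    have heq : ‖((f (t₀ + α N) : ℂ)) - (-1 : ℂ) • ((f t₀ : ℝ) : ℂ)‖
        = |f (t₀ + α N) + f t₀| := by
      rw [neg_smul, one_smul, sub_neg_eq_add]
      rw [show ((f (t₀ + α N) : ℂ)) + ((f t₀ : ℝ) : ℂ) = ((f (t₀ + α N) + f t₀ : ℝ) : ℂ) by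
        push_cast; ring]
      rw [Complex.norm_real, Real.norm_eq_abs]
    simp only at hb
    rw [heq] at hb
    rw [abs_of_nonneg (by linarith)] at hb
    linarith
end

section
/- If f : I → E is c-uniformly recurrent and f is not identically zero, then f does not vanish at infinity, i.e., it is not the case that ‖f(t)‖ → 0 as |t| → ∞. -/
/-- a nonzero c-uniformly recurrent function does not vanish at infinity. -/
theorem cUniformlyRecurrent_not_vanish {E : Type*} [NormedAddCommGroup E]
    [NormedSpace ℂ E]
    (I : Set ℝ) (hI : I = Set.univ ∨ I = Set.Ici (0 : ℝ))
    (c : ℂ) (hc : ‖c‖ = 1) (f : ℝ → E) (hf : Continuous f)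
    (hur : CUniformlyRecurrent I c f)
    (hne : ∃ t ∈ I, f t ≠ 0) :
    ¬ (∀ ε > 0, ∃ M : ℝ, ∀ t ∈ I, M ≤ |t| → ‖f t‖ ≤ ε) := by
  intro h
  obtain ⟨t0, ht0I, ht0⟩ := hne
  set δ := ‖f t0‖ with hδ
  have hδpos : 0 < δ := norm_pos_iff.mpr ht0
  obtain ⟨M, hM⟩ := h (δ / 3) (by linarith)
  obtain ⟨α, hmono, hpos, htend, hrec⟩ := hur
  obtain ⟨N, hN⟩ := hrec (δ / 3) (by linarith)
  obtain ⟨n, hn1, hn2⟩ := ((htend.eventually_ge_atTop (M + |t0|)).and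
    (Filter.eventually_ge_atTop N)).exists
  have htI : t0 + α n ∈ I := by
    rcases hI with h1 | h1
    · simp [h1]
    · rw [h1] at ht0I ⊢
      have := (hpos n).le
      simp only [Set.mem_Ici] at ht0I ⊢
      linarith
  have habs : M ≤ |t0 + α n| := by
    have h1 : M ≤ t0 + α n := by
      have := neg_abs_le t0
      linarith
    exact le_trans h1 (le_abs_self _)
  have hsmall : ‖f (t0 + α n)‖ ≤ δ / 3 := hM _ htI habs
  have hrecn : ‖f (t0 + α n) - c • f t0‖ ≤ δ / 3 := hN n hn2 t0 ht0I
  have hcf : ‖c • f t0‖ = δ := by rw [norm_smul, hc, one_mul]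
  have h2 := abs_norm_sub_norm_le (f (t0 + α n)) (c • f t0)
  have h3 := neg_abs_le (‖f (t0 + α n)‖ - ‖c • f t0‖)
  rw [hcf] at h2 h3
  linarith
end

section
/- Let f : ℝ → ℂ, f = h + iq with h, q : ℝ → ℝ, be c-uniformly recurrent where c = e^{iφ} with sin φ ≠ 0. If h vanishes at infinity (h(t) → 0 as |t| → ∞), then f ≡ 0. -/
/-- if f is c-uniformly recurrent with c = exp(iφ), sin φ ≠ 0, and
the real part of f vanishes at infinity, then f ≡ 0. -/
theorem cUniformlyRecurrent_re_vanish_zero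
    (φ : ℝ) (hφ : Real.sin φ ≠ 0)
    (c : ℂ) (hc : c = Complex.exp ((φ : ℂ) * Complex.I))
    (f : ℝ → ℂ) (hf : Continuous f)
    (hur : CUniformlyRecurrent Set.univ c f)
    (hre : ∀ ε > 0, ∃ M : ℝ, ∀ t : ℝ, M ≤ |t| → |(f t).re| ≤ ε) :
    ∀ t : ℝ, f t = 0 := by
  obtain ⟨α, hmono, hpos, htend, hrec⟩ := hur
  have hcre : c.re = Real.cos φ := by
    rw [hc]; simp [Complex.exp_re]
  have hcim : c.im = Real.sin φ := by
    rw [hc]; simp [Complex.exp_im]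
  have hc1 : ‖c‖ = 1 := by
    rw [hc, Complex.norm_exp]; simp
  -- Step A: (c * f t).re = 0 for all t
  have key : ∀ t : ℝ, (c * f t).re = 0 := by
    intro t
    have h0 : ∀ ε > 0, |(c * f t).re| ≤ 0 + ε := by
      intro ε hε
      obtain ⟨N, hN⟩ := hrec (ε/2) (by linarith)
      obtain ⟨M, hM⟩ := hre (ε/2) (by linarith)
      obtain ⟨n, hn1, hn2⟩ :=
        ((htend.eventually_ge_atTop (max (M - t) (-t))).and
          (Filter.eventually_ge_atTop N)).exists
      have hge : max (M - t) (-t) ≤ α n := hn1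
      have htM : M ≤ |t + α n| := by
        have h1 : M - t ≤ α n := le_trans (le_max_left _ _) hge
        have h2 : -t ≤ α n := le_trans (le_max_right _ _) hge
        rw [abs_of_nonneg (by linarith)]; linarith
      have hA := hN n hn2 t (Set.mem_univ t)
      have hB := hM (t + α n) htM
      have hC : |(f (t + α n)).re - (c * f t).re| ≤ ‖f (t + α n) - c • f t‖ := by
        have := Complex.abs_re_le_norm (f (t + α n) - c • f t)
        simpa [smul_eq_mul] using this
      calc |(c * f t).re|
          = |((c * f t).re - (f (t + α n)).re) + (f (t + α n)).re| := by ring_nf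
        _ ≤ |(c * f t).re - (f (t + α n)).re| + |(f (t + α n)).re| := abs_add_le _ _
        _ = |(f (t + α n)).re - (c * f t).re| + |(f (t + α n)).re| := by rw [abs_sub_comm]
        _ ≤ ε/2 + ε/2 := add_le_add (le_trans hC hA) hB
        _ = 0 + ε := by ring
    have := le_of_forall_pos_le_add h0
    have := abs_nonneg ((c * f t).re)
    have : |(c * f t).re| = 0 := le_antisymm ‹_› ‹_›
    exact abs_eq_zero.mp this
  -- Step B: bound ‖f t‖ by a multiple of |(f t).re|
  set K : ℝ := 1 + |Real.cos φ / Real.sin φ| with hK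
  have hK0 : 0 < K := by positivity
  have hbound : ∀ t : ℝ, ‖f t‖ ≤ K * |(f t).re| := by
    intro t
    have h1 : (c * f t).re = Real.cos φ * (f t).re - Real.sin φ * (f t).im := by
      rw [Complex.mul_re, hcre, hcim]
    have h2 : (f t).im = Real.cos φ * (f t).re / Real.sin φ := by
      have := key t
      rw [h1] at this
      field_simp
      linarith
    have h3 : ‖f t‖ ≤ |(f t).re| + |(f t).im| := by
      exact Complex.norm_le_abs_re_add_abs_im _
    have h4 : |(f t).im| = |Real.cos φ / Real.sin φ| * |(f t).re| := by
      rw [h2, ← abs_mul]; ring_nf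
    rw [hK]; rw [h4] at h3; nlinarith [abs_nonneg ((f t).re)]
  -- Step C: f vanishes at infinity in norm
  have hvan : ∀ ε > 0, ∃ M : ℝ, ∀ t : ℝ, M ≤ |t| → ‖f t‖ ≤ ε := by
    intro ε hε
    obtain ⟨M, hM⟩ := hre (ε / K) (by positivity)
    refine ⟨M, fun t ht => ?_⟩
    have := hM t ht
    calc ‖f t‖ ≤ K * |(f t).re| := hbound t
      _ ≤ K * (ε / K) := mul_le_mul_of_nonneg_left this hK0.le
      _ = ε := by field_simp
  -- Step D: conclude f t = 0
  intro t
  have h0 : ∀ ε > 0, ‖f t‖ ≤ 0 + ε := by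
    intro ε hε
    obtain ⟨N, hN⟩ := hrec (ε/2) (by linarith)
    obtain ⟨M, hM⟩ := hvan (ε/2) (by linarith)
    obtain ⟨n, hn1, hn2⟩ :=
      ((htend.eventually_ge_atTop (max (M - t) (-t))).and
        (Filter.eventually_ge_atTop N)).exists
    have h1 : M - t ≤ α n := le_trans (le_max_left _ _) hn1
    have h2 : -t ≤ α n := le_trans (le_max_right _ _) hn1
    have htM : M ≤ |t + α n| := by rw [abs_of_nonneg (by linarith)]; linarith
    have hA := hN n hn2 t (Set.mem_univ t)
    have hB := hM (t + α n) htM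
    have hsm : ‖c • f t‖ = ‖f t‖ := by
      rw [norm_smul, hc1, one_mul]
    calc ‖f t‖ = ‖c • f t‖ := hsm.symm
      _ = ‖(c • f t - f (t + α n)) + f (t + α n)‖ := by ring_nf
      _ ≤ ‖c • f t - f (t + α n)‖ + ‖f (t + α n)‖ := norm_add_le _ _
      _ = ‖f (t + α n) - c • f t‖ + ‖f (t + α n)‖ := by rw [norm_sub_rev]
      _ ≤ ε/2 + ε/2 := add_le_add hA hB
      _ = 0 + ε := by ring
  have h1 := le_of_forall_pos_le_add h0
  have h2 := norm_nonneg (f t)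
  have : ‖f t‖ = 0 := le_antisymm (by linarith) h2
  exact norm_eq_zero.mp this
end
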